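/- Let G = (V,E) be a finite simple graph with n nodes, p ≥ 1, and let S_0 = V ⊇ S_1 ⊇ … ⊇ S_{n} be the sets produced by the generalized peeling algorithm that at each step removes a node j minimizing Δ_j(S_{i−1}). Then max_i f_p(S_i) ≥ (1/(p+1))·max_{∅≠T⊆V} f_p(T). -/
import Mathlib


/-- Induced degree: `d_v(S)` is the number of neighbors of `v` lying in `S`
if `v ∈ S`, and `0` otherwise. -/
noncomputable def indDeg {V : Type*} [DecidableEq V] (G : SimpleGraph V)
    (S : Finset V) (v : V) : ℕ :=
  if v ∈ S then Nat.card {u : V // u ∈ S ∧ G.Adj v u} else 0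

/-- `Δ_j(S) = d_j(S)^p + Σ_{i ∈ N(j)∩S} (d_i(S)^p − (d_i(S)−1)^p)`
(note `j ∉ N(j)` since the graph is simple). -/
noncomputable def DeltaP {V : Type*} [DecidableEq V] (G : SimpleGraph V)
    [DecidableRel G.Adj] (p : ℝ) (S : Finset V) (j : V) : ℝ :=
  (indDeg G S j : ℝ) ^ p +
    ∑ i ∈ S.filter (fun i => G.Adj j i ∧ i ≠ j),
      ((indDeg G S i : ℝ) ^ p - ((indDeg G S i : ℝ) - 1) ^ p)

/-- `f_p(S) = (1/|S|) Σ_{v∈S} d_v(S)^p`. -/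
noncomputable def fp {V : Type*} [DecidableEq V] (G : SimpleGraph V)
    (p : ℝ) (S : Finset V) : ℝ :=
  (1 / (S.card : ℝ)) * ∑ v ∈ S, (indDeg G S v : ℝ) ^ p

section helpers

variable {V : Type*} [DecidableEq V] (G : SimpleGraph V) [DecidableRel G.Adj]

lemma indDeg_eq_card (S : Finset V) {v : V} (hv : v ∈ S) :
    indDeg G S v = (S.filter (G.Adj v)).card := by
  rw [indDeg, if_pos hv, ← Nat.card_eq_finsetCard]
  exact Nat.card_congr (Equiv.subtypeEquivRight (by simp))

lemma indDeg_mono {S T : Finset V} (hTS : T ⊆ S) {v : V} (hv : v ∈ T) :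
    indDeg G T v ≤ indDeg G S v := by
  rw [indDeg_eq_card G T hv, indDeg_eq_card G S (hTS hv)]
  exact Finset.card_le_card (Finset.filter_subset_filter _ hTS)

lemma indDeg_pos {S : Finset V} {v j : V} (hv : v ∈ S) (hj : j ∈ S) (hadj : G.Adj v j) :
    1 ≤ indDeg G S v := by
  rw [indDeg_eq_card G S hv]
  exact Finset.card_pos.mpr ⟨j, Finset.mem_filter.mpr ⟨hj, hadj⟩⟩

lemma indDeg_erase {S : Finset V} {j v : V} (hj : j ∈ S) (hv : v ∈ S) (hvj : v ≠ j) :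
    indDeg G S v = indDeg G (S.erase j) v + (if G.Adj v j then 1 else 0) := by
  have hv' : v ∈ S.erase j := Finset.mem_erase.mpr ⟨hvj, hv⟩
  rw [indDeg_eq_card G S hv, indDeg_eq_card G _ hv', Finset.filter_erase]
  by_cases h : G.Adj v j
  · have hjf : j ∈ S.filter (G.Adj v) := Finset.mem_filter.mpr ⟨hj, h⟩
    rw [if_pos h, Finset.card_erase_of_mem hjf]
    have := Finset.card_pos.mpr ⟨j, hjf⟩
    omega
  · rw [if_neg h, Finset.erase_eq_of_notMem (by simp [h]), add_zero]

lemma sum_pow_erase (p : ℝ) {S : Finset V} {j : V} (hj : j ∈ S) :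
    ∑ v ∈ S, (indDeg G S v : ℝ) ^ p
      = ∑ v ∈ S.erase j, (indDeg G (S.erase j) v : ℝ) ^ p + DeltaP G p S j := by
  have key : ∀ v ∈ S.erase j, (indDeg G S v : ℝ) ^ p
      = (indDeg G (S.erase j) v : ℝ) ^ p
        + (if G.Adj j v then
            ((indDeg G S v : ℝ) ^ p - ((indDeg G S v : ℝ) - 1) ^ p) else 0) := by
    intro v hv
    obtain ⟨hvj, hvS⟩ := Finset.mem_erase.mp hv
    by_cases h : G.Adj v j
    · rw [if_pos h.symm]
      have he := indDeg_erase G hj hvS hvj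
      rw [if_pos h] at he
      have he' : (indDeg G (S.erase j) v : ℝ) = (indDeg G S v : ℝ) - 1 := by
        rw [he]; push_cast; ring
      rw [he']; ring
    · rw [if_neg (fun h' => h h'.symm), add_zero]
      have he := indDeg_erase G hj hvS hvj
      rw [if_neg h, add_zero] at he
      rw [he]
  rw [← Finset.add_sum_erase _ _ hj, Finset.sum_congr rfl key, Finset.sum_add_distrib]
  have hfil : S.filter (fun i => G.Adj j i ∧ i ≠ j) = (S.erase j).filter (fun i => G.Adj j i) := by
    ext x
    simp only [Finset.mem_filter, Finset.mem_erase]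
    tauto
  rw [DeltaP, hfil, Finset.sum_filter]
  ring

lemma rpow_diff_mono {p : ℝ} (hp : 1 ≤ p) {m n : ℕ} (hm : 1 ≤ m) (hmn : m ≤ n) :
    (m : ℝ) ^ p - ((m : ℝ) - 1) ^ p ≤ (n : ℝ) ^ p - ((n : ℝ) - 1) ^ p := by
  rcases eq_or_lt_of_le hmn with rfl | h
  · exact le_rfl
  set a : ℝ := (m : ℝ) with ha
  set b : ℝ := (n : ℝ) with hb
  have ha1 : (1 : ℝ) ≤ a := by rw [ha]; exact_mod_cast hm
  have hab : a + 1 ≤ b := by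
    have : (m : ℝ) + 1 ≤ (n : ℝ) := by exact_mod_cast h
    linarith
  have hcv := convexOn_rpow hp
  have h1 := hcv.secant_mono (a := a - 1) (x := a) (y := b)
    (Set.mem_Ici.mpr (by linarith)) (Set.mem_Ici.mpr (by linarith))
    (Set.mem_Ici.mpr (by linarith)) (by intro hc; linarith) (by intro hc; linarith)
    (by linarith)
  have h2 := hcv.secant_mono (a := b) (x := a - 1) (y := b - 1)
    (Set.mem_Ici.mpr (by linarith)) (Set.mem_Ici.mpr (by linarith))
    (Set.mem_Ici.mpr (by linarith)) (by intro hc; linarith) (by intro hc; linarith)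
    (by linarith)
  have e1 : a - (a - 1) = (1:ℝ) := by ring
  rw [e1, div_one] at h1
  have hd : (0:ℝ) < b - (a - 1) := by linarith
  have e2 : ((a-1)^p - b^p) / ((a-1) - b) = (b^p - (a-1)^p) / (b - (a-1)) := by
    rw [div_eq_div_iff (by linarith) (by linarith)]; ring
  have e3 : ((b-1)^p - b^p) / ((b-1) - b) = b^p - (b-1)^p := by
    rw [show (b-1) - b = (-1:ℝ) by ring, div_neg, div_one]; ring
  rw [e2, e3] at h2
  exact le_trans h1 h2

lemma mul_rpow_diff_le {p : ℝ} (hp : 1 ≤ p) (n : ℕ) :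
    (n : ℝ) * ((n : ℝ) ^ p - ((n : ℝ) - 1) ^ p) ≤ p * (n : ℝ) ^ p := by
  rcases Nat.eq_zero_or_pos n with rfl | hn
  · simp [Real.zero_rpow (ne_of_gt (by linarith : (0:ℝ) < p))]
  set d : ℝ := (n : ℝ) with hd
  have hd1 : (1 : ℝ) ≤ d := by rw [hd]; exact_mod_cast hn
  have hd0 : (0 : ℝ) < d := by linarith
  have hber := one_add_mul_self_le_rpow_one_add (s := -1/d) (by
    rw [neg_div]
    have : 1/d ≤ 1 := by rw [div_le_one hd0]; exact hd1
    linarith) hp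
  have h1 : (1 : ℝ) + (-1/d) = (d - 1)/d := by field_simp; ring
  rw [h1, Real.div_rpow (by linarith) (le_of_lt hd0)] at hber
  have hA : (0 : ℝ) < d ^ p := Real.rpow_pos_of_pos hd0 p
  have hq := mul_le_mul_of_nonneg_left hber (le_of_lt hA)
  have hq2 := mul_le_mul_of_nonneg_left hq (le_of_lt hd0)
  have e1 : d * (d ^ p * (1 + p * (-1/d))) = d * d ^ p - p * d ^ p := by
    field_simp; ring
  have e2 : d * (d ^ p * ((d-1) ^ p / d ^ p)) = d * (d-1) ^ p := by
    rw [mul_div_cancel₀ _ (ne_of_gt hA)]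
  rw [e1, e2] at hq2
  nlinarith [hq2]

lemma sum_delta_le (p : ℝ) (hp : 1 ≤ p) (S : Finset V) :
    ∑ j ∈ S, DeltaP G p S j ≤ (p + 1) * ∑ v ∈ S, (indDeg G S v : ℝ) ^ p := by
  unfold DeltaP
  rw [Finset.sum_add_distrib]
  have hsum : ∑ j ∈ S, ∑ i ∈ S.filter (fun i => G.Adj j i ∧ i ≠ j),
        ((indDeg G S i : ℝ) ^ p - ((indDeg G S i : ℝ) - 1) ^ p)
      = ∑ i ∈ S, (indDeg G S i : ℝ) *
        ((indDeg G S i : ℝ) ^ p - ((indDeg G S i : ℝ) - 1) ^ p) := by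
    simp_rw [Finset.sum_filter]
    rw [Finset.sum_comm]
    refine Finset.sum_congr rfl fun i hi => ?_
    rw [← Finset.sum_filter, Finset.sum_const, nsmul_eq_mul]
    congr 2
    have : S.filter (fun j => G.Adj j i ∧ i ≠ j) = S.filter (G.Adj i) := by
      ext x
      simp only [Finset.mem_filter]
      constructor
      · rintro ⟨hx, hadj, _⟩; exact ⟨hx, hadj.symm⟩
      · rintro ⟨hx, hadj⟩; exact ⟨hx, hadj.symm, hadj.ne⟩
    rw [this, ← indDeg_eq_card G S hi]
  rw [hsum]
  have hb : ∑ i ∈ S, (indDeg G S i : ℝ) *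
      ((indDeg G S i : ℝ) ^ p - ((indDeg G S i : ℝ) - 1) ^ p)
      ≤ ∑ i ∈ S, p * (indDeg G S i : ℝ) ^ p :=
    Finset.sum_le_sum fun i _ => mul_rpow_diff_le hp _
  rw [← Finset.mul_sum] at hb
  linarith

lemma delta_mono (p : ℝ) (hp : 1 ≤ p) {T S : Finset V} (hTS : T ⊆ S) {j : V} (hj : j ∈ T) :
    DeltaP G p T j ≤ DeltaP G p S j := by
  unfold DeltaP
  apply add_le_add
  · exact Real.rpow_le_rpow (Nat.cast_nonneg _)
      (Nat.cast_le.mpr (indDeg_mono G hTS hj)) (by linarith)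
  · calc ∑ i ∈ T.filter (fun i => G.Adj j i ∧ i ≠ j),
          ((indDeg G T i : ℝ) ^ p - ((indDeg G T i : ℝ) - 1) ^ p)
        ≤ ∑ i ∈ T.filter (fun i => G.Adj j i ∧ i ≠ j),
          ((indDeg G S i : ℝ) ^ p - ((indDeg G S i : ℝ) - 1) ^ p) := by
          refine Finset.sum_le_sum fun i hi => ?_
          obtain ⟨hiT, hadj, _⟩ := Finset.mem_filter.mp hi
          exact rpow_diff_mono hp (indDeg_pos G hiT hj hadj.symm)
            (indDeg_mono G hTS hiT)
      _ ≤ ∑ i ∈ S.filter (fun i => G.Adj j i ∧ i ≠ j),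
          ((indDeg G S i : ℝ) ^ p - ((indDeg G S i : ℝ) - 1) ^ p) := by
          refine Finset.sum_le_sum_of_subset_of_nonneg
            (Finset.filter_subset_filter _ hTS) fun i hi _ => ?_
          obtain ⟨hiS, hadj, _⟩ := Finset.mem_filter.mp hi
          have h1 : 1 ≤ indDeg G S i := indDeg_pos G hiS (hTS hj) hadj.symm
          have h1' : (1:ℝ) ≤ (indDeg G S i : ℝ) := by exact_mod_cast h1
          have := Real.rpow_le_rpow (by linarith : (0:ℝ) ≤ (indDeg G S i : ℝ) - 1)
            (by linarith : (indDeg G S i : ℝ) - 1 ≤ (indDeg G S i : ℝ)) (by linarith)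
          linarith

lemma sum_eq_card_mul_fp (p : ℝ) {U : Finset V} (hU : U.Nonempty) :
    ∑ v ∈ U, (indDeg G U v : ℝ) ^ p = (U.card : ℝ) * fp G p U := by
  have hc : ((U.card : ℝ)) ≠ 0 := Nat.cast_ne_zero.mpr hU.card_pos.ne'
  rw [fp, ← mul_assoc, mul_one_div_cancel hc, one_mul]

lemma delta_ge_fp (p : ℝ) {T : Finset V} (hT : T.Nonempty)
    (hmax : ∀ T' : Finset V, T'.Nonempty → fp G p T' ≤ fp G p T) {j : V} (hj : j ∈ T) :
    fp G p T ≤ DeltaP G p T j := by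
  have hid := sum_pow_erase G p hj
  have ht : 0 < T.card := hT.card_pos
  have htR : (0:ℝ) < (T.card : ℝ) := by exact_mod_cast ht
  have hA : ∑ v ∈ T, (indDeg G T v : ℝ) ^ p = (T.card : ℝ) * fp G p T :=
    sum_eq_card_mul_fp G p hT
  have hcard' : (T.erase j).card = T.card - 1 := Finset.card_erase_of_mem hj
  have hB : ∑ v ∈ T.erase j, (indDeg G (T.erase j) v : ℝ) ^ p
      ≤ ((T.card : ℝ) - 1) * fp G p T := by
    by_cases hne : (T.erase j).Nonempty
    · have hc' : (0:ℝ) < ((T.erase j).card : ℝ) := by exact_mod_cast hne.card_pos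
      have hB' : ∑ v ∈ T.erase j, (indDeg G (T.erase j) v : ℝ) ^ p
          = ((T.erase j).card : ℝ) * fp G p (T.erase j) :=
        sum_eq_card_mul_fp G p hne
      rw [hB']
      have hcast : ((T.erase j).card : ℝ) = (T.card : ℝ) - 1 := by
        rw [hcard']; push_cast [Nat.cast_sub ht]; ring
      rw [hcast]
      have hle := hmax _ hne
      nlinarith [hle]
    · have h0' : (T.erase j).card = 0 := by
        rw [Finset.not_nonempty_iff_eq_empty.mp hne]; rfl
      have h1 : T.card = 1 := by omega
      rw [Finset.not_nonempty_iff_eq_empty.mp hne]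
      simp only [Finset.sum_empty]
      rw [h1]; norm_num
  linarith [hid, hA, hB]

end helpers

theorem genPeel_approx {V : Type*} [Fintype V] [DecidableEq V]
    (G : SimpleGraph V) [DecidableRel G.Adj] (p : ℝ) (hp : 1 ≤ p)
    (S : ℕ → Finset V) (h0 : S 0 = Finset.univ)
    (hstep : ∀ i < Fintype.card V, ∃ j ∈ S i,
      (∀ k ∈ S i, DeltaP G p (S i) j ≤ DeltaP G p (S i) k) ∧
      S (i + 1) = (S i).erase j) :
    ∃ i ≤ Fintype.card V, ∀ T : Finset V, T.Nonempty →
      (1 / (p + 1)) * fp G p T ≤ fp G p (S i) := by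
  classical
  set n := Fintype.card V with hn
  have hcard : ∀ i ≤ n, (S i).card = n - i := by
    intro i
    induction i with
    | zero => intro _; simp [h0, hn]
    | succ k ih =>
      intro hk
      have hk' : k < n := by omega
      obtain ⟨j, hjS, _, hSe⟩ := hstep k hk'
      rw [hSe, Finset.card_erase_of_mem hjS, ih (le_of_lt hk')]
      omega
  rcases isEmpty_or_nonempty V with hV | hV
  · refine ⟨0, Nat.zero_le _, fun T hT => ?_⟩
    obtain ⟨x, _⟩ := hT
    exact (IsEmpty.false x).elim
  · obtain ⟨T, hTmem, hTmax'⟩ := Finset.exists_max_image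
      ((Finset.univ : Finset (Finset V)).filter (fun t => t.Nonempty)) (fp G p)
      ⟨{Classical.arbitrary V}, by simp⟩
    have hT : T.Nonempty := (Finset.mem_filter.mp hTmem).2
    have hTmax : ∀ T' : Finset V, T'.Nonempty → fp G p T' ≤ fp G p T := by
      intro T' hT'
      exact hTmax' T' (Finset.mem_filter.mpr ⟨Finset.mem_univ _, hT'⟩)
    have hTn : ¬ T ⊆ S n := by
      intro hsub
      have hc := hcard n le_rfl
      have : T.card ≤ (S n).card := Finset.card_le_card hsub
      have := hT.card_pos
      omega
    set i := Nat.findGreatest (fun i => T ⊆ S i) n with hi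
    have hPi : T ⊆ S i :=
      Nat.findGreatest_spec (P := fun i => T ⊆ S i) (Nat.zero_le n)
        (show T ⊆ S 0 by rw [h0]; exact Finset.subset_univ T)
    have hile : i ≤ n := Nat.findGreatest_le n
    have hilt : i < n := lt_of_le_of_ne hile (fun h => hTn (h ▸ hPi))
    obtain ⟨j, hjS, hjmin, hSe⟩ := hstep i hilt
    have hnot : ¬ T ⊆ S (i + 1) :=
      Nat.findGreatest_is_greatest (P := fun i => T ⊆ S i) (n := n) (by omega) (by omega)
    have hjT : j ∈ T := by
      by_contra hjT
      exact hnot (by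
        rw [hSe]
        intro v hv
        exact Finset.mem_erase.mpr ⟨fun h => hjT (h ▸ hv), hPi hv⟩)
    refine ⟨i, le_of_lt hilt, ?_⟩
    intro T' hT'
    have hScard : 0 < (S i).card := by
      have := hcard i (le_of_lt hilt); omega
    have hcR : (0:ℝ) < ((S i).card : ℝ) := by exact_mod_cast hScard
    have havg : ((S i).card : ℝ) * DeltaP G p (S i) j ≤ ∑ k ∈ S i, DeltaP G p (S i) k := by
      have := Finset.card_nsmul_le_sum (S i) (DeltaP G p (S i)) _ hjmin
      rwa [nsmul_eq_mul] at this
    have hsum := sum_delta_le G p hp (S i)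
    have hfpS : ∑ v ∈ S i, (indDeg G (S i) v : ℝ) ^ p = ((S i).card : ℝ) * fp G p (S i) :=
      sum_eq_card_mul_fp G p (Finset.card_pos.mp hScard)
    have key : DeltaP G p (S i) j ≤ (p + 1) * fp G p (S i) := by
      rw [hfpS] at hsum
      have h' : ((S i).card : ℝ) * DeltaP G p (S i) j
          ≤ ((S i).card : ℝ) * ((p + 1) * fp G p (S i)) := by nlinarith
      exact le_of_mul_le_mul_left h' hcR
    have h1 : fp G p T ≤ DeltaP G p T j := delta_ge_fp G p hT hTmax hjT
    have h2 : DeltaP G p T j ≤ DeltaP G p (S i) j := delta_mono G p hp hPi hjT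
    have h3 : fp G p T' ≤ fp G p T := hTmax T' hT'
    have hp1 : (0:ℝ) < p + 1 := by linarith
    rw [one_div, inv_mul_le_iff₀ hp1]
    linarith
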